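/- Let A be an N×N Hermitian positive definite complex matrix and B_1, …, B_n be N×N Hermitian positive semidefinite complex matrices, and for x ∈ ℝⁿ with x_i ≥ 0 for all i let Σ(x) = (A + Σ_{i=1}^n x_i B_i)⁻¹. Then the M-optimal metric f_M(x) = max_{1≤i≤N} (Σ(x))_{i,i}, the largest diagonal entry of Σ(x) (real-valued since the diagonal entries of a Hermitian matrix are real), is convex on the nonnegative orthant {x ∈ ℝⁿ | x_i ≥ 0 for all i}. -/

import Mathlib

open Matrix ComplexOrder in
private lemma quad_re_nonneg {N : ℕ} {M : Matrix (Fin N) (Fin N) ℂ}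
    (hM : M.PosSemidef) (w : Fin N → ℂ) : 0 ≤ (star w ⬝ᵥ M *ᵥ w).re :=
  (Complex.le_def.mp (hM.dotProduct_mulVec_nonneg w)).1

open Matrix in
/-- expansion of `star (M⁻¹ *ᵥ v) ⬝ᵥ w` for Hermitian `M`. -/
private lemma star_inv_mulVec_dot {N : ℕ} {M : Matrix (Fin N) (Fin N) ℂ}
    (hM : M.IsHermitian) (v w : Fin N → ℂ) :
    star (M⁻¹ *ᵥ v) ⬝ᵥ w = star v ⬝ᵥ M⁻¹ *ᵥ w := by
  rw [star_mulVec, ← Matrix.dotProduct_mulVec, conjTranspose_nonsing_inv, hM.eq]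

open Matrix ComplexOrder in
private lemma key_ineq {N : ℕ} {M : Matrix (Fin N) (Fin N) ℂ}
    (hM : M.PosDef) (u v : Fin N → ℂ) :
    (star u ⬝ᵥ v).re + (star v ⬝ᵥ u).re - (star u ⬝ᵥ M *ᵥ u).re
      ≤ (star v ⬝ᵥ M⁻¹ *ᵥ v).re := by
  have hdet : IsUnit M.det := hM.det_pos.ne'.isUnit
  set w := u - M⁻¹ *ᵥ v with hw
  have h0 : 0 ≤ (star w ⬝ᵥ M *ᵥ w).re := quad_re_nonneg hM.posSemidef w
  have hMw : M *ᵥ w = M *ᵥ u - v := by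
    rw [hw, mulVec_sub, mulVec_mulVec, Matrix.mul_nonsing_inv _ hdet, one_mulVec]
  have hexp : star w ⬝ᵥ M *ᵥ w
      = star u ⬝ᵥ M *ᵥ u - star u ⬝ᵥ v - (star v ⬝ᵥ u - star v ⬝ᵥ M⁻¹ *ᵥ v) := by
    rw [hw, hMw]
    rw [star_sub, sub_dotProduct, dotProduct_sub, dotProduct_sub,
      star_inv_mulVec_dot hM.isHermitian, star_inv_mulVec_dot hM.isHermitian,
      mulVec_mulVec, Matrix.nonsing_inv_mul _ hdet, one_mulVec]
  rw [hexp] at h0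
  simp only [Complex.sub_re] at h0
  linarith

open Matrix ComplexOrder in
private lemma key_eq {N : ℕ} {M : Matrix (Fin N) (Fin N) ℂ}
    (hM : M.PosDef) (v : Fin N → ℂ) :
    (star v ⬝ᵥ M⁻¹ *ᵥ v).re
      = (star (M⁻¹ *ᵥ v) ⬝ᵥ v).re + (star v ⬝ᵥ (M⁻¹ *ᵥ v)).re
        - (star (M⁻¹ *ᵥ v) ⬝ᵥ M *ᵥ (M⁻¹ *ᵥ v)).re := by
  have hdet : IsUnit M.det := hM.det_pos.ne'.isUnit
  have h1 : star (M⁻¹ *ᵥ v) ⬝ᵥ v = star v ⬝ᵥ M⁻¹ *ᵥ v :=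
    star_inv_mulVec_dot hM.isHermitian v v
  have h2 : star (M⁻¹ *ᵥ v) ⬝ᵥ M *ᵥ (M⁻¹ *ᵥ v) = star v ⬝ᵥ M⁻¹ *ᵥ v := by
    rw [star_inv_mulVec_dot hM.isHermitian, mulVec_mulVec, mulVec_mulVec,
      Matrix.nonsing_inv_mul _ hdet, Matrix.one_mul]
  rw [h1, h2]
  ring

open Matrix in
private lemma sum_mulVec' {N n : ℕ} (M : Fin n → Matrix (Fin N) (Fin N) ℂ) (v : Fin N → ℂ) :
    (∑ i, M i) *ᵥ v = ∑ i, M i *ᵥ v := by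
  funext k
  simp only [Matrix.mulVec, dotProduct, Matrix.sum_apply, Finset.sum_apply, Finset.sum_mul]
  rw [Finset.sum_comm]

open Matrix in
private lemma dot_sum' {N n : ℕ} (v : Fin N → ℂ) (w : Fin n → Fin N → ℂ) :
    v ⬝ᵥ ∑ i, w i = ∑ i, v ⬝ᵥ w i := by
  simp only [dotProduct, Finset.sum_apply, Finset.mul_sum]
  rw [Finset.sum_comm]

open Matrix ComplexOrder in
private lemma sum_psd {N n : ℕ} (B : Fin n → Matrix (Fin N) (Fin N) ℂ)
    (hB : ∀ i, (B i).PosSemidef) (x : Fin n → ℝ) (hx : ∀ i, 0 ≤ x i) :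
    (∑ i, x i • B i).PosSemidef := by
  rw [posSemidef_iff_dotProduct_mulVec]
  constructor
  · have : ∀ i ∈ Finset.univ, ((x i • B i)ᴴ : Matrix (Fin N) (Fin N) ℂ) = x i • B i := by
      intro i _
      rw [conjTranspose_smul, star_trivial, (hB i).1.eq]
    simpa [Matrix.IsHermitian, conjTranspose_sum] using Finset.sum_congr rfl this
  · intro v
    rw [sum_mulVec', dot_sum']
    refine Finset.sum_nonneg fun i _ => ?_
    rw [smul_mulVec, dotProduct_smul]
    have h := (hB i).dotProduct_mulVec_nonneg v
    rw [Complex.le_def] at h ⊢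
    constructor
    · simpa [Complex.smul_re] using mul_nonneg (hx i) (by simpa using h.1)
    · simp [Complex.smul_im, ← h.2]

open Matrix ComplexOrder in
/-- The M-optimal metric `x ↦ max_j ((A + ∑ i, x i • B i)⁻¹)_{j,j}` is convex
on the nonnegative orthant. -/
theorem maxDiag_convex (N n : ℕ) (hN : 0 < N)
    (A : Matrix (Fin N) (Fin N) ℂ) (hA : A.PosDef)
    (B : Fin n → Matrix (Fin N) (Fin N) ℂ) (hB : ∀ i, (B i).PosSemidef) :
    ConvexOn ℝ {x : Fin n → ℝ | ∀ i, 0 ≤ x i}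
      (fun x : Fin n → ℝ =>
        ⨆ j : Fin N, (((A + ∑ i, x i • B i)⁻¹) j j).re) := by
  haveI : Nonempty (Fin N) := Fin.pos_iff_nonempty.mp hN
  set Mf : (Fin n → ℝ) → Matrix (Fin N) (Fin N) ℂ :=
    fun x => A + ∑ i, x i • B i with hMf
  have hPD : ∀ x : Fin n → ℝ, (∀ i, 0 ≤ x i) → (Mf x).PosDef := fun x hx =>
    hA.add_posSemidef (sum_psd B hB x hx)
  constructor
  · intro x hx y hy a b ha hb hab i
    have : (a • x + b • y) i = a * x i + b * y i := rfl
    rw [this]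
    exact add_nonneg (mul_nonneg ha (hx i)) (mul_nonneg hb (hy i))
  · intro x hx y hy a b ha hb hab
    simp only
    have hz : ∀ i, 0 ≤ (a • x + b • y) i := fun i =>
      add_nonneg (mul_nonneg ha (hx i)) (mul_nonneg hb (hy i))
    have hMz : Mf (a • x + b • y) = a • Mf x + b • Mf y := by
      simp only [hMf]
      have h1 : ∀ i ∈ Finset.univ, ((a • x + b • y) i • B i : Matrix (Fin N) (Fin N) ℂ)
          = a • (x i • B i) + b • (y i • B i) := by
        intro i _
        simp [Pi.add_apply, Pi.smul_apply, smul_eq_mul, add_smul, mul_smul]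
      rw [Finset.sum_congr rfl h1, Finset.sum_add_distrib, ← Finset.smul_sum, ← Finset.smul_sum]
      nth_rewrite 1 [← one_smul ℝ A, ← hab]
      module
    have hPDx := hPD x hx
    have hPDy := hPD y hy
    have hPDz := hPD _ hz
    refine ciSup_le fun j => ?_
    set e : Fin N → ℂ := Pi.single j 1 with he
    have hdot : ∀ W : Matrix (Fin N) (Fin N) ℂ, star e ⬝ᵥ W *ᵥ e = W j j := by
      intro W
      have hse : star e = e := by
        funext k
        simp [he, Pi.single_apply, apply_ite]
      rw [hse, he, mulVec_single, single_dotProduct]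
      simp
    set u : Fin N → ℂ := (Mf (a • x + b • y))⁻¹ *ᵥ e with hu
    have hsplit : (star u ⬝ᵥ (Mf (a • x + b • y)) *ᵥ u).re
        = a * (star u ⬝ᵥ (Mf x) *ᵥ u).re + b * (star u ⬝ᵥ (Mf y) *ᵥ u).re := by
      rw [hMz, add_mulVec, smul_mulVec, smul_mulVec, dotProduct_add,
        dotProduct_smul, dotProduct_smul]
      simp [Complex.smul_re]
    have hzval : (((Mf (a • x + b • y))⁻¹) j j).re
        = (star u ⬝ᵥ e).re + (star e ⬝ᵥ u).re
          - (star u ⬝ᵥ (Mf (a • x + b • y)) *ᵥ u).re := by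
      rw [← hdot ((Mf (a • x + b • y))⁻¹)]
      exact key_eq hPDz e
    have hxb : (star u ⬝ᵥ e).re + (star e ⬝ᵥ u).re - (star u ⬝ᵥ (Mf x) *ᵥ u).re
        ≤ (((Mf x)⁻¹) j j).re := by
      rw [← hdot ((Mf x)⁻¹)]
      exact key_ineq hPDx u e
    have hyb : (star u ⬝ᵥ e).re + (star e ⬝ᵥ u).re - (star u ⬝ᵥ (Mf y) *ᵥ u).re
        ≤ (((Mf y)⁻¹) j j).re := by
      rw [← hdot ((Mf y)⁻¹)]
      exact key_ineq hPDy u e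
    have step1 : (((Mf (a • x + b • y))⁻¹) j j).re
        ≤ a * (((Mf x)⁻¹) j j).re + b * (((Mf y)⁻¹) j j).re := by
      rw [hzval, hsplit]
      have hax := mul_le_mul_of_nonneg_left hxb ha
      have hby := mul_le_mul_of_nonneg_left hyb hb
      have hp : (star u ⬝ᵥ e).re + (star e ⬝ᵥ u).re
          = a * ((star u ⬝ᵥ e).re + (star e ⬝ᵥ u).re)
            + b * ((star u ⬝ᵥ e).re + (star e ⬝ᵥ u).re) := by
        rw [← add_mul, hab, one_mul]
      linarith [hax, hby]
    have hsx : (((Mf x)⁻¹) j j).re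
        ≤ ⨆ j' : Fin N, (((A + ∑ i, x i • B i)⁻¹) j' j').re :=
      le_ciSup (f := fun j' : Fin N => (((A + ∑ i, x i • B i)⁻¹) j' j').re)
        (Set.Finite.bddAbove (Set.finite_range _)) j
    have hsy : (((Mf y)⁻¹) j j).re
        ≤ ⨆ j' : Fin N, (((A + ∑ i, y i • B i)⁻¹) j' j').re :=
      le_ciSup (f := fun j' : Fin N => (((A + ∑ i, y i • B i)⁻¹) j' j').re)
        (Set.Finite.bddAbove (Set.finite_range _)) j
    exact step1.trans (add_le_add (mul_le_mul_of_nonneg_left hsx ha)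
      (mul_le_mul_of_nonneg_left hsy hb))
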